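/- String equation for genus 0 correlators (Lemma 3.1, genus 0 case): Let t_0,t_1,… be formal variables. For n ≥ 3 and a_1,…,a_n ≥ 0 define ⟨⟨ψ^{a_1},…,ψ^{a_n}⟩⟩_{0,n} = Σ_{k≥0} (1/k!) Σ_{b_1,…,b_k ≥ 0, a_1+⋯+a_n+b_1+⋯+b_k = n+k−3} [(n+k−3)!/(a_1!⋯a_n! b_1!⋯b_k!)] t_{b_1}⋯t_{b_k} ∈ ℚ[[t_0,t_1,…]]. Then (i) 𝕃⟨⟨1,…,1⟩⟩_{0,n} = 0, where ⟨⟨1,…,1⟩⟩_{0,n} = ⟨⟨ψ^0,…,ψ^0⟩⟩_{0,n} and 𝕃 = ∂/∂t_0 − Σ_{i≥1} t_i ∂/∂t_{i−1}; and (ii) for the generating series G = Σ_{a_1,…,a_n ≥ 0} ⟨⟨ψ^{a_1},…,ψ^{a_n}⟩⟩_{0,n} u_1^{a_1+1}⋯u_n^{a_n+1} ∈ ℚ[[t_0,t_1,…]][[u_1,…,u_n]] one has 𝕃G = (u_1 + ⋯ + u_n)·G. -/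

import Mathlib

/-!
STATEMENT 15: String equation for genus 0 correlators (Lemma 3.1, genus 0):
(i) 𝕃⟨⟨1,…,1⟩⟩_{0,n} = 0 for n ≥ 3, and
(ii) for G = Σ_{a_1,…,a_n} ⟨⟨ψ^{a_1},…,ψ^{a_n}⟩⟩_{0,n} u_1^{a_1+1}⋯u_n^{a_n+1}
one has 𝕃G = (u_1+⋯+u_n)·G, where 𝕃 acts on the u-coefficients.
-/

noncomputable section

/-- The degree-`k` part of the correlator `⟨⟨ψ^{a_1},…,ψ^{a_n}⟩⟩_{0,n}`. -/
def corrPoly (n : ℕ) (a : Fin n → ℕ) (k : ℕ) : MvPolynomial ℕ ℚ :=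
  if 3 ≤ n + k ∧ (∑ i, a i) ≤ n + k - 3 then
    ((k.factorial : ℚ)⁻¹) •
      ∑ b ∈ Finset.Nat.antidiagonalTuple k (n + k - 3 - ∑ i, a i),
        MvPolynomial.C (((n + k - 3).factorial : ℚ) /
          ((∏ i, ((a i).factorial : ℚ)) * ∏ j, ((b j).factorial : ℚ))) *
          ∏ j, MvPolynomial.X (b j)
  else 0

/-- The correlator `⟨⟨ψ^{a_1},…,ψ^{a_n}⟩⟩_{0,n} ∈ ℚ[[t_0,t_1,…]]`. -/
def corr (n : ℕ) (a : Fin n → ℕ) : MvPowerSeries ℕ ℚ :=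
  fun m => MvPolynomial.coeff m (corrPoly n a (m.sum fun _ e => e))

/-- Formal partial derivative `∂/∂t_j` on `ℚ[[t_0,t_1,…]]`. -/
def pd (j : ℕ) (F : MvPowerSeries ℕ ℚ) : MvPowerSeries ℕ ℚ :=
  fun m => ((m j + 1 : ℕ) : ℚ) * F (m + Finsupp.single j 1)

/-- The string operator `𝕃 = ∂/∂t_0 − Σ_{i≥1} t_i ∂/∂t_{i−1}`. -/
def Lop (F : MvPowerSeries ℕ ℚ) : MvPowerSeries ℕ ℚ :=
  fun m => pd 0 F m -
    ∑ i ∈ m.support.filter (fun i => 1 ≤ i),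
      MvPowerSeries.coeff m (MvPowerSeries.X i * pd (i - 1) F)

/-- The generating series
`G = Σ_{a_1,…,a_n ≥ 0} ⟨⟨ψ^{a_1},…,ψ^{a_n}⟩⟩_{0,n} u_1^{a_1+1}⋯u_n^{a_n+1}`
in `ℚ[[t_0,t_1,…]][[u_1,…,u_n]]`. -/
def Gser (n : ℕ) : MvPowerSeries (Fin n) (MvPowerSeries ℕ ℚ) :=
  fun c => if ∀ i, 1 ≤ c i then corr n (fun i => c i - 1) else 0

/-! ### Auxiliary definitions and lemmas -/

open Finset

/-- total degree of a monomial -/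
def degm (m : ℕ →₀ ℕ) : ℕ := m.sum fun _ e => e
/-- weight of a monomial -/
def wtm (m : ℕ →₀ ℕ) : ℕ := m.sum fun v e => v * e
/-- the exponent-multiset of a tuple, as a finsupp -/
def mlt {k : ℕ} (b : Fin k → ℕ) : ℕ →₀ ℕ := ∑ j, Finsupp.single (b j) 1

lemma degm_add (x y : ℕ →₀ ℕ) : degm (x + y) = degm x + degm y :=
  Finsupp.sum_add_index' (by simp) (by intros; rfl)

lemma wtm_add (x y : ℕ →₀ ℕ) : wtm (x + y) = wtm x + wtm y :=
  Finsupp.sum_add_index' (by simp) (by intros; ring)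

lemma degm_single (v e : ℕ) : degm (Finsupp.single v e) = e := by
  unfold degm; rw [Finsupp.sum_single_index (by simp)]

lemma wtm_single (v e : ℕ) : wtm (Finsupp.single v e) = v * e := by
  unfold wtm; rw [Finsupp.sum_single_index (by simp)]

lemma degm_zero : degm 0 = 0 := Finsupp.sum_zero_index

lemma wtm_zero : wtm 0 = 0 := Finsupp.sum_zero_index

lemma degm_mlt {k : ℕ} (b : Fin k → ℕ) : degm (mlt b) = k := by
  have h := map_sum (AddMonoidHom.mk ⟨degm, degm_zero⟩ degm_add)
    (fun j => Finsupp.single (b j) 1) univ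
  simp only [AddMonoidHom.coe_mk, ZeroHom.coe_mk] at h
  rw [mlt, h]; simp [degm_single]

lemma wtm_mlt {k : ℕ} (b : Fin k → ℕ) : wtm (mlt b) = ∑ j, b j := by
  have h := map_sum (AddMonoidHom.mk ⟨wtm, wtm_zero⟩ wtm_add)
    (fun j => Finsupp.single (b j) 1) univ
  simp only [AddMonoidHom.coe_mk, ZeroHom.coe_mk] at h
  rw [mlt, h]; simp [wtm_single]

lemma mlt_apply {k : ℕ} (b : Fin k → ℕ) (v : ℕ) :
    mlt b v = (univ.filter fun j => b j = v).card := by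
  unfold mlt
  rw [Finsupp.finset_sum_apply]
  simp only [Finsupp.single_apply]
  rw [Finset.sum_boole]
  simp

lemma degm_add_single (μ : ℕ →₀ ℕ) (v : ℕ) : degm (μ + Finsupp.single v 1) = degm μ + 1 := by
  rw [degm_add, degm_single]

lemma wtm_add_single (μ : ℕ →₀ ℕ) (v : ℕ) : wtm (μ + Finsupp.single v 1) = wtm μ + v := by
  rw [wtm_add, wtm_single, mul_one]

/-- The tuple-sum `Σ_b 1/∏ b_j!` over tuples with exponent-multiset `m`. -/
def Ssum (m : ℕ →₀ ℕ) : ℚ :=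
  ∑ b ∈ (Finset.Nat.antidiagonalTuple (degm m) (wtm m)).filter (fun b => mlt b = m),
    (∏ j, ((b j).factorial : ℚ))⁻¹

lemma Ssum_eq (m : ℕ →₀ ℕ) {K N : ℕ} (hK : degm m = K) (hN : wtm m = N) :
    Ssum m = ∑ b ∈ (Finset.Nat.antidiagonalTuple K N).filter (fun b => mlt b = m),
      (∏ j, ((b j).factorial : ℚ))⁻¹ := by
  subst hK; subst hN; rfl

lemma mlt_succAbove {k : ℕ} (b : Fin (k+1) → ℕ) (j : Fin (k+1)) :
    mlt b = Finsupp.single (b j) 1 + mlt (j.removeNth b) :=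
  Fin.sum_univ_succAbove (fun i => Finsupp.single (b i) 1) j

lemma sum_eq_of_mlt {k : ℕ} {b : Fin k → ℕ} {m : ℕ →₀ ℕ} (h : mlt b = m) :
    ∑ j, b j = wtm m := by rw [← h, wtm_mlt]

/-- The master bijection identity for the tuple-sums. -/
lemma master (μ : ℕ →₀ ℕ) (v : ℕ) :
    ((μ v : ℚ) + 1) * Ssum (μ + Finsupp.single v 1) =
    ((degm μ : ℚ) + 1) * ((v.factorial : ℚ))⁻¹ * Ssum μ := by
  classical
  set k := degm μ with hk
  rw [Ssum_eq (μ + Finsupp.single v 1) (degm_add_single μ v) (wtm_add_single μ v),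
    Ssum_eq μ rfl rfl]
  set B' := (Finset.Nat.antidiagonalTuple (k+1) (wtm μ + v)).filter
      (fun b => mlt b = μ + Finsupp.single v 1) with hB'
  set B := (Finset.Nat.antidiagonalTuple k (wtm μ)).filter (fun b => mlt b = μ) with hB
  have key : ∑ b' ∈ B', ∑ j ∈ univ.filter (fun j => b' j = v),
        (∏ i, ((b' i).factorial : ℚ))⁻¹ =
      ∑ j : Fin (k+1), ∑ b ∈ B,
        ((v.factorial : ℚ))⁻¹ * (∏ i, ((b i).factorial : ℚ))⁻¹ := by
    rw [Finset.sum_sigma', Finset.sum_sigma']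
    refine Finset.sum_bij'
      (fun p _ => (⟨p.2, p.2.removeNth p.1⟩ : Σ _ : Fin (k+1), Fin k → ℕ))
      (fun q _ => (⟨q.1.insertNth v q.2, q.1⟩ : Σ _ : Fin (k+1) → ℕ, Fin (k+1)))
      ?_ ?_ ?_ ?_ ?_
    · rintro ⟨b', j⟩ hp
      obtain ⟨h1, h2⟩ := Finset.mem_sigma.mp hp
      rw [hB', mem_filter] at h1
      have hbj : b' j = v := by simpa using (mem_filter.mp h2).2
      have hdec := mlt_succAbove b' j
      rw [hbj, h1.2] at hdec
      have hmlt2 : mlt (j.removeNth b') = μ := by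
        rw [add_comm μ (Finsupp.single v 1)] at hdec
        exact add_left_cancel hdec.symm
      refine Finset.mem_sigma.mpr ⟨mem_univ _, ?_⟩
      rw [hB, mem_filter, Finset.Nat.mem_antidiagonalTuple]
      exact ⟨by rw [sum_eq_of_mlt hmlt2], hmlt2⟩
    · rintro ⟨j, b⟩ hq
      obtain ⟨-, h2⟩ := Finset.mem_sigma.mp hq
      rw [hB, mem_filter, Finset.Nat.mem_antidiagonalTuple] at h2
      have hmlt' : mlt (j.insertNth v b) = μ + Finsupp.single v 1 := by
        rw [mlt_succAbove (j.insertNth v b) j, Fin.insertNth_apply_same,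
          Fin.removeNth_insertNth, h2.2, add_comm]
      refine Finset.mem_sigma.mpr ⟨?_, ?_⟩
      · rw [hB', mem_filter, Finset.Nat.mem_antidiagonalTuple]
        exact ⟨by rw [sum_eq_of_mlt hmlt', wtm_add_single], hmlt'⟩
      · refine mem_filter.mpr ⟨mem_univ _, ?_⟩
        simp
    · rintro ⟨b', j⟩ hp
      obtain ⟨-, h2⟩ := Finset.mem_sigma.mp hp
      have hbj : b' j = v := by simpa using (mem_filter.mp h2).2
      simp only
      congr 1
      rw [← hbj, Fin.insertNth_self_removeNth]
    · rintro ⟨j, b⟩ hq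
      simp only
      congr 1
      simp
    · rintro ⟨b', j⟩ hp
      obtain ⟨-, h2⟩ := Finset.mem_sigma.mp hp
      have hbj : b' j = v := by simpa using (mem_filter.mp h2).2
      simp only
      rw [Fin.prod_univ_succAbove (fun i => ((b' i).factorial : ℚ)) j, hbj, mul_inv]
      rfl
  calc ((μ v : ℚ) + 1) * ∑ b' ∈ B', (∏ i, ((b' i).factorial : ℚ))⁻¹
      = ∑ b' ∈ B', ∑ j ∈ univ.filter (fun j => b' j = v),
          (∏ i, ((b' i).factorial : ℚ))⁻¹ := by
        rw [Finset.mul_sum]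
        refine Finset.sum_congr rfl fun b' hb' => ?_
        rw [Finset.sum_const, nsmul_eq_mul]
        congr 1
        rw [hB', mem_filter] at hb'
        rw [← mlt_apply b' v, hb'.2]
        simp [Finsupp.single_apply]
    _ = ∑ j : Fin (k+1), ∑ b ∈ B,
          ((v.factorial : ℚ))⁻¹ * (∏ i, ((b i).factorial : ℚ))⁻¹ := key
    _ = ((k : ℚ) + 1) * ((v.factorial : ℚ))⁻¹ *
          ∑ b ∈ B, (∏ i, ((b i).factorial : ℚ))⁻¹ := by
        rw [Finset.sum_const, nsmul_eq_mul, card_univ, Fintype.card_fin, ← Finset.mul_sum]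
        push_cast
        ring

open MvPolynomial in
/-- Closed form for the coefficients of `corr`. -/
lemma corr_apply (n : ℕ) (hn : 3 ≤ n) (a : Fin n → ℕ) (m : ℕ →₀ ℕ) :
    corr n a m = if (∑ i, a i) + wtm m = n + degm m - 3 then
      (((degm m).factorial : ℚ))⁻¹ *
        (((n + degm m - 3).factorial : ℚ) / ∏ i, ((a i).factorial : ℚ)) * Ssum m
    else 0 := by
  classical
  have hm : (m.sum fun _ e => e) = degm m := rfl
  set k := degm m with hk
  rw [corr, corrPoly, hm]
  by_cases hle : (∑ i, a i) ≤ n + k - 3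
  · rw [if_pos ⟨by omega, hle⟩]
    have hX : ∀ b : Fin k → ℕ, (∏ j, (X (b j) : MvPolynomial ℕ ℚ)) = monomial (mlt b) 1 := by
      intro b
      rw [mlt, monomial_sum_one]
      rfl
    rw [coeff_smul]
    rw [coeff_sum]
    simp only [coeff_C_mul, hX, coeff_monomial]
    simp only [mul_ite, mul_one, mul_zero]
    rw [← Finset.sum_filter]
    by_cases hc : (∑ i, a i) + wtm m = n + k - 3
    · rw [if_pos hc]
      have hN : wtm m = n + k - 3 - ∑ i, a i := by omega
      rw [Ssum_eq m hk.symm hN]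
      rw [Finset.mul_sum, smul_eq_mul, Finset.mul_sum]
      refine Finset.sum_congr rfl fun b hb => ?_
      rw [div_mul_eq_div_div, div_eq_mul_inv (_ / _)]
      ring
    · rw [if_neg hc]
      have : (Finset.Nat.antidiagonalTuple k (n + k - 3 - ∑ i, a i)).filter
          (fun b => mlt b = m) = ∅ := by
        refine Finset.filter_eq_empty_iff.mpr fun {b} hb => ?_
        intro hmlt
        rw [Finset.Nat.mem_antidiagonalTuple] at hb
        have : wtm m = n + k - 3 - ∑ i, a i := by rw [← hmlt, wtm_mlt, hb]
        omega
      rw [this]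
      simp
  · rw [if_neg (by intro h; exact hle (by omega)), if_neg (by intro h; exact hle (by omega))]
    simp

/-- String equation at the level of coefficients. -/
lemma lop_corr (n : ℕ) (hn : 3 ≤ n) (a : Fin n → ℕ) (m : ℕ →₀ ℕ) :
    Lop (corr n a) m = ∑ ℓ : Fin n,
      (if 1 ≤ a ℓ then corr n (fun i => a i - if i = ℓ then 1 else 0) m else 0) := by
  classical
  set k := degm m with hk
  set A := ∑ i, a i with hA
  have hfacA : (∏ i, ((a i).factorial : ℚ)) ≠ 0 :=
    Finset.prod_ne_zero_iff.mpr fun i _ => Nat.cast_ne_zero.mpr (Nat.factorial_ne_zero _)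
  have hsub : ∀ i, 1 ≤ m i → (m - Finsupp.single i 1) + Finsupp.single i 1 = m := by
    intro i h
    ext v
    simp only [Finsupp.add_apply, Finsupp.tsub_apply, Finsupp.single_apply]
    split_ifs with hv
    · subst hv; omega
    · omega
  -- the first term
  have h1 : pd 0 (corr n a) m = ((m 0 : ℚ) + 1) * corr n a (m + Finsupp.single 0 1) := by
    rw [pd, Nat.cast_add, Nat.cast_one]
  -- the generic term in the sum
  have hterm : ∀ i ∈ m.support.filter (fun i => 1 ≤ i),
      MvPowerSeries.coeff m (MvPowerSeries.X i * pd (i-1) (corr n a)) =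
      ((((m - Finsupp.single i 1 : ℕ →₀ ℕ) (i-1) : ℕ) : ℚ) + 1) *
        corr n a ((m - Finsupp.single i 1) + Finsupp.single (i-1) 1) := by
    intro i hi
    rw [mem_filter, Finsupp.mem_support_iff] at hi
    have hmi : 1 ≤ m i := Nat.one_le_iff_ne_zero.mpr hi.1
    have hle : Finsupp.single i 1 ≤ m := Finsupp.single_le_iff.mpr hmi
    rw [MvPowerSeries.X_def, MvPowerSeries.coeff_monomial_mul, if_pos hle, one_mul,
      MvPowerSeries.coeff_apply, pd]
    rw [Nat.cast_add, Nat.cast_one]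
  rw [Lop, h1]
  by_cases P : A + wtm m = n + k - 2
  · -- main case
    have hkd : ∀ i, 1 ≤ m i → degm (m - Finsupp.single i 1) + 1 = k := by
      intro i h
      conv_rhs => rw [hk, ← hsub i h]
      rw [degm_add_single]
    have hwd : ∀ i, 1 ≤ m i → wtm (m - Finsupp.single i 1) + i = wtm m := by
      intro i h
      conv_rhs => rw [← hsub i h]
      rw [wtm_add_single]
    -- first term
    have e1 : ((m 0 : ℚ) + 1) * corr n a (m + Finsupp.single 0 1) =
        ((n + k - 2).factorial : ℚ) / ((k.factorial : ℚ) * ∏ i, ((a i).factorial : ℚ)) *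
          Ssum m := by
      rw [corr_apply n hn, degm_add_single, wtm_add_single]
      rw [if_pos (by omega)]
      have hnk : n + (k + 1) - 3 = n + k - 2 := by omega
      rw [hnk]
      have hM := master m 0
      have hfac : ((k+1).factorial : ℚ) = (k+1) * k.factorial := by
        rw [Nat.factorial_succ]; push_cast; ring
      have hk1 : ((k : ℚ) + 1) ≠ 0 := by positivity
      have hkf : ((k.factorial : ℚ)) ≠ 0 := Nat.cast_ne_zero.mpr (Nat.factorial_ne_zero _)
      calc ((m 0 : ℚ) + 1) * ((((k+1).factorial : ℚ))⁻¹ *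
              (((n + k - 2).factorial : ℚ) / ∏ i, ((a i).factorial : ℚ)) *
              Ssum (m + Finsupp.single 0 1))
          = (((k+1).factorial : ℚ))⁻¹ *
              (((n + k - 2).factorial : ℚ) / ∏ i, ((a i).factorial : ℚ)) *
              (((m 0 : ℚ) + 1) * Ssum (m + Finsupp.single 0 1)) := by ring
        _ = (((k+1).factorial : ℚ))⁻¹ *
              (((n + k - 2).factorial : ℚ) / ∏ i, ((a i).factorial : ℚ)) *
              (((k : ℚ) + 1) * ((Nat.factorial 0 : ℚ))⁻¹ * Ssum m) := by rw [hM]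
        _ = ((n + k - 2).factorial : ℚ) /
              ((k.factorial : ℚ) * ∏ i, ((a i).factorial : ℚ)) * Ssum m := by
            rw [hfac]
            field_simp
            ring
    rw [e1]
    -- the sum term
    have e2 : ∀ i ∈ m.support.filter (fun i => 1 ≤ i),
        MvPowerSeries.coeff m (MvPowerSeries.X i * pd (i-1) (corr n a)) =
        ((i * m i : ℕ) : ℚ) *
          (((n + k - 3).factorial : ℚ) /
            ((k.factorial : ℚ) * ∏ i, ((a i).factorial : ℚ)) * Ssum m) := by
      intro i hi
      have hi' := hi
      rw [mem_filter, Finsupp.mem_support_iff] at hi'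
      have hmi : 1 ≤ m i := Nat.one_le_iff_ne_zero.mpr hi'.1
      have hi1 : 1 ≤ i := hi'.2
      set μ := m - Finsupp.single i 1 with hμ
      rw [hterm i hi, ← hμ]
      rw [corr_apply n hn, degm_add_single, wtm_add_single]
      have hdk : degm μ + 1 = k := hkd i hmi
      have hwk : wtm μ + i = wtm m := hwd i hmi
      have hwi : i ≤ wtm m := by omega
      rw [if_pos (by omega)]
      have hnk : n + (degm μ + 1) - 3 = n + k - 3 := by omega
      rw [hnk]
      have hM1 := master μ (i-1)
      have hM2 := master μ i
      have hmieq : μ + Finsupp.single i 1 = m := hsub i hmi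
      have hmiv : (μ i : ℚ) + 1 = (m i : ℚ) := by
        have : μ i + 1 = m i := by
          have := congrArg (fun f => f i) hmieq
          simpa using this
        exact_mod_cast this
      rw [hmieq] at hM2
      rw [hmiv] at hM2
      -- from hM2 : (m i) * Ssum m = (degm μ + 1) * (i!)⁻¹ * Ssum μ
      have hif : ((i.factorial : ℚ)) ≠ 0 := Nat.cast_ne_zero.mpr (Nat.factorial_ne_zero _)
      have hif1 : (((i-1).factorial : ℚ)) ≠ 0 := Nat.cast_ne_zero.mpr (Nat.factorial_ne_zero _)
      have hfaci : (i : ℚ) * ((i-1).factorial : ℚ) = (i.factorial : ℚ) := by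
        rw [← Nat.mul_factorial_pred (by omega : i ≠ 0)]
        push_cast
        ring
      have hstep : ((μ (i-1) : ℚ) + 1) * Ssum (μ + Finsupp.single (i-1) 1) =
          ((i : ℚ) * (m i : ℚ)) * Ssum m := by
        rw [hM1]
        have : ((degm μ : ℚ) + 1) * Ssum μ = (m i : ℚ) * (i.factorial : ℚ) * Ssum m := by
          have h2 := hM2
          field_simp at h2 ⊢
          linarith [h2]
        calc ((degm μ : ℚ) + 1) * (((i-1).factorial : ℚ))⁻¹ * Ssum μ
            = (((degm μ : ℚ) + 1) * Ssum μ) * (((i-1).factorial : ℚ))⁻¹ := by ring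
          _ = ((m i : ℚ) * (i.factorial : ℚ) * Ssum m) * (((i-1).factorial : ℚ))⁻¹ := by
              rw [this]
          _ = ((i : ℚ) * (m i : ℚ)) * Ssum m := by
              rw [← hfaci]
              field_simp
      calc ((μ (i-1) : ℚ) + 1) * ((((degm μ + 1).factorial : ℚ))⁻¹ *
              (((n + k - 3).factorial : ℚ) / ∏ i, ((a i).factorial : ℚ)) *
              Ssum (μ + Finsupp.single (i-1) 1))
          = (((degm μ + 1).factorial : ℚ))⁻¹ *
              (((n + k - 3).factorial : ℚ) / ∏ i, ((a i).factorial : ℚ)) *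
              (((μ (i-1) : ℚ) + 1) * Ssum (μ + Finsupp.single (i-1) 1)) := by ring
        _ = (((degm μ + 1).factorial : ℚ))⁻¹ *
              (((n + k - 3).factorial : ℚ) / ∏ i, ((a i).factorial : ℚ)) *
              (((i : ℚ) * (m i : ℚ)) * Ssum m) := by rw [hstep]
        _ = ((i * m i : ℕ) : ℚ) *
              (((n + k - 3).factorial : ℚ) /
                ((k.factorial : ℚ) * ∏ i, ((a i).factorial : ℚ)) * Ssum m) := by
            rw [hdk]
            push_cast
            field_simp
    rw [Finset.sum_congr rfl e2, ← Finset.sum_mul]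
    have hwsum : ∑ i ∈ m.support.filter (fun i => 1 ≤ i), ((i * m i : ℕ) : ℚ) =
        (wtm m : ℚ) := by
      rw [← Nat.cast_sum]
      congr 1
      rw [wtm, Finsupp.sum]
      refine Finset.sum_filter_of_ne (fun x _ h => ?_)
      by_contra hx
      have hx0 : x = 0 := by omega
      exact h (by simp [hx0])
    rw [hwsum]
    -- right hand side
    have hrhs : ∀ ℓ : Fin n,
        (if 1 ≤ a ℓ then corr n (fun i => a i - if i = ℓ then 1 else 0) m else 0) =
        ((a ℓ : ℚ)) * (((n + k - 3).factorial : ℚ) /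
          ((k.factorial : ℚ) * ∏ i, ((a i).factorial : ℚ)) * Ssum m) := by
      intro ℓ
      by_cases hℓ : 1 ≤ a ℓ
      · rw [if_pos hℓ]
        set a' : Fin n → ℕ := fun i => a i - if i = ℓ then 1 else 0 with ha'
        have ha'ℓ : a' ℓ = a ℓ - 1 := by simp [ha']
        have ha'ne : ∀ i, i ≠ ℓ → a' i = a i := by
          intro i h; simp [ha', h]
        have hsumA : A = a ℓ + ∑ i ∈ univ.erase ℓ, a i :=
          (Finset.add_sum_erase univ a (mem_univ ℓ)).symm
        have hsa' : ∑ i, a' i = a ℓ - 1 + ∑ i ∈ univ.erase ℓ, a i := by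
          rw [← Finset.add_sum_erase univ a' (mem_univ ℓ), ha'ℓ]
          congr 1
          exact Finset.sum_congr rfl fun i hi => ha'ne i (Finset.ne_of_mem_erase hi)
        have hsa'' : ∑ i, a' i = A - 1 := by omega
        rw [corr_apply n hn, hsa'']
        rw [if_pos (by omega)]
        have hpa' : ((a ℓ : ℚ)) * ∏ i, ((a' i).factorial : ℚ) =
            ∏ i, ((a i).factorial : ℚ) := by
          rw [← Finset.mul_prod_erase univ (fun i => ((a' i).factorial : ℚ)) (mem_univ ℓ),
            ← Finset.mul_prod_erase univ (fun i => ((a i).factorial : ℚ)) (mem_univ ℓ)]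
          have herase : ∏ i ∈ univ.erase ℓ, ((a' i).factorial : ℚ) =
              ∏ i ∈ univ.erase ℓ, ((a i).factorial : ℚ) :=
            Finset.prod_congr rfl fun i hi => by rw [ha'ne i (Finset.ne_of_mem_erase hi)]
          rw [herase, ha'ℓ, ← mul_assoc]
          congr 2
          have := Nat.mul_factorial_pred (by omega : a ℓ ≠ 0)
          exact_mod_cast this
        have hfa' : (∏ i, ((a' i).factorial : ℚ)) ≠ 0 :=
          Finset.prod_ne_zero_iff.mpr fun i _ => Nat.cast_ne_zero.mpr (Nat.factorial_ne_zero _)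
        have hkf : ((k.factorial : ℚ)) ≠ 0 := Nat.cast_ne_zero.mpr (Nat.factorial_ne_zero _)
        rw [← hpa']
        field_simp
        ring
      · rw [if_neg hℓ]
        have : a ℓ = 0 := by omega
        rw [this]
        simp
    rw [Finset.sum_congr rfl (fun ℓ _ => hrhs ℓ), ← Finset.sum_mul]
    have hcast : ∑ ℓ : Fin n, (a ℓ : ℚ) = (A : ℚ) := by rw [hA]; push_cast; ring
    rw [hcast]
    -- final algebra
    have hnk2 : ((n + k - 2).factorial : ℚ) = ((n + k - 2 : ℕ) : ℚ) *
        ((n + k - 3).factorial : ℚ) := by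
      have h1 : n + k - 2 = (n + k - 3) + 1 := by omega
      rw [h1, Nat.factorial_succ]
      push_cast
      ring
    have hPQ : ((n + k - 2 : ℕ) : ℚ) = (A : ℚ) + (wtm m : ℚ) := by
      rw [← P]; push_cast; ring
    rw [hnk2, hPQ]
    ring
  · -- degenerate case: everything vanishes
    have e1 : corr n a (m + Finsupp.single 0 1) = 0 := by
      rw [corr_apply n hn, if_neg, ]
      rw [degm_add_single, wtm_add_single]
      omega
    have e2 : ∀ i ∈ m.support.filter (fun i => 1 ≤ i),
        MvPowerSeries.coeff m (MvPowerSeries.X i * pd (i-1) (corr n a)) = 0 := by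
      intro i hi
      have hi' := hi
      rw [mem_filter, Finsupp.mem_support_iff] at hi'
      have hmi : 1 ≤ m i := Nat.one_le_iff_ne_zero.mpr hi'.1
      have hi1 : 1 ≤ i := hi'.2
      rw [hterm i hi]
      have hdk : degm (m - Finsupp.single i 1) + 1 = k := by
        conv_rhs => rw [hk, ← hsub i hmi]
        rw [degm_add_single]
      have hwk : wtm (m - Finsupp.single i 1) + i = wtm m := by
        conv_rhs => rw [← hsub i hmi]
        rw [wtm_add_single]
      rw [corr_apply n hn, degm_add_single, wtm_add_single, if_neg (by omega), mul_zero]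
    have e3 : ∀ ℓ : Fin n,
        (if 1 ≤ a ℓ then corr n (fun i => a i - if i = ℓ then 1 else 0) m else 0) = 0 := by
      intro ℓ
      by_cases hℓ : 1 ≤ a ℓ
      · rw [if_pos hℓ]
        set a' : Fin n → ℕ := fun i => a i - if i = ℓ then 1 else 0 with ha'
        have hsa' : ∑ i, a' i = A - 1 := by
          have h1 : ∑ i, a' i = a ℓ - 1 + ∑ i ∈ univ.erase ℓ, a i := by
            rw [← Finset.add_sum_erase univ a' (mem_univ ℓ)]
            have : a' ℓ = a ℓ - 1 := by simp [ha']
            rw [this]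
            congr 1
            exact Finset.sum_congr rfl fun i hi => by
              simp [ha', Finset.ne_of_mem_erase hi]
          have h2 : A = a ℓ + ∑ i ∈ univ.erase ℓ, a i :=
            (Finset.add_sum_erase univ a (mem_univ ℓ)).symm
          omega
        have hAle : a ℓ ≤ A := by
          rw [hA]
          exact Finset.single_le_sum (fun i _ => Nat.zero_le _) (mem_univ ℓ)
        rw [corr_apply n hn, hsa', if_neg (by omega)]
      · rw [if_neg hℓ]
    rw [e1, mul_zero, Finset.sum_congr rfl e2, Finset.sum_congr rfl (fun ℓ _ => e3 ℓ)]
    simp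

lemma pd_zero (j : ℕ) : pd j 0 = 0 := by
  funext m
  show ((m j + 1 : ℕ) : ℚ) * (0 : MvPowerSeries ℕ ℚ) (m + Finsupp.single j 1) = 0
  rw [show (0 : MvPowerSeries ℕ ℚ) (m + Finsupp.single j 1) = 0 from rfl, mul_zero]

lemma lop_zero : Lop 0 = 0 := by
  funext m
  show pd 0 (0 : MvPowerSeries ℕ ℚ) m - _ = _
  rw [pd_zero]
  have : ∀ i ∈ m.support.filter (fun i => 1 ≤ i),
      MvPowerSeries.coeff m (MvPowerSeries.X i * pd (i - 1) (0 : MvPowerSeries ℕ ℚ)) = 0 := by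
    intro i _
    rw [pd_zero, mul_zero, map_zero]
  rw [Finset.sum_congr rfl this, Finset.sum_const, smul_zero]
  show (0 : ℚ) - 0 = (0 : MvPowerSeries ℕ ℚ) m
  simp
  rfl

theorem stmt15 (n : ℕ) (hn : 3 ≤ n) :
    Lop (corr n fun _ => 0) = 0 ∧
    (fun c => Lop (Gser n c)) =
      (∑ i : Fin n, MvPowerSeries.X i) * Gser n := by
  classical
  constructor
  · funext m
    rw [show (Lop (corr n fun _ => 0)) m = Lop (corr n (fun _ => 0)) m from rfl,
      lop_corr n hn (fun _ => 0) m]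
    simp
    rfl
  · funext c
    show Lop (Gser n c) = MvPowerSeries.coeff c ((∑ i : Fin n, MvPowerSeries.X i) * Gser n)
    rw [Finset.sum_mul, map_sum]
    have hXco : ∀ i : Fin n, MvPowerSeries.coeff c
        (MvPowerSeries.X i * Gser n) =
        if Finsupp.single i 1 ≤ c then Gser n (c - Finsupp.single i 1) else 0 := by
      intro i
      rw [MvPowerSeries.X_def, MvPowerSeries.coeff_monomial_mul]
      split_ifs with h
      · rw [one_mul, MvPowerSeries.coeff_apply]
      · rfl
    rw [Finset.sum_congr rfl (fun i _ => hXco i)]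
    by_cases hc : ∀ i, 1 ≤ c i
    · have hg : Gser n c = corr n (fun i => c i - 1) := by
        rw [Gser, if_pos hc]
      rw [hg]
      funext m
      rw [show (Lop (corr n fun i => c i - 1)) m =
        Lop (corr n (fun i => c i - 1)) m from rfl, lop_corr n hn _ m]
      rw [show (∑ i : Fin n, if Finsupp.single i 1 ≤ c then
          Gser n (c - Finsupp.single i 1) else 0) m =
        ∑ i : Fin n, (if Finsupp.single i 1 ≤ c then
          Gser n (c - Finsupp.single i 1) else 0) m from by
          exact Finset.sum_apply m _ _]
      refine Finset.sum_congr rfl fun ℓ _ => ?_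
      have hcl : Finsupp.single ℓ 1 ≤ c := Finsupp.single_le_iff.mpr (hc ℓ)
      rw [if_pos hcl]
      have hsub : ∀ j, (c - Finsupp.single ℓ 1 : Fin n →₀ ℕ) j = c j - if j = ℓ then 1 else 0 := by
        intro j
        rw [Finsupp.tsub_apply, Finsupp.single_apply]
        congr 1
        by_cases h : j = ℓ
        · simp [h]
        · simp [h, Ne.symm h]
      by_cases h2 : 2 ≤ c ℓ
      · rw [if_pos (by omega : 1 ≤ c ℓ - 1)]
        have hall : ∀ j, 1 ≤ (c - Finsupp.single ℓ 1 : Fin n →₀ ℕ) j := by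
          intro j
          rw [hsub j]
          by_cases h : j = ℓ
          · simp [h]; omega
          · simp [h]
            exact hc j
        rw [show (Gser n (c - Finsupp.single ℓ 1)) m =
          Gser n (c - Finsupp.single ℓ 1) m from rfl, Gser]
        rw [if_pos hall]
        have : (fun j => (c - Finsupp.single ℓ 1 : Fin n →₀ ℕ) j - 1) =
            (fun j => (c j - 1) - if j = ℓ then 1 else 0) := by
          funext j
          rw [hsub j]
          by_cases h : j = ℓ
          · simp [h]
          · simp [h]
        rw [this]
      · rw [if_neg (by omega : ¬ 1 ≤ c ℓ - 1)]
        have hcl1 : c ℓ = 1 := by have := hc ℓ; omega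
        have : ¬ ∀ j, 1 ≤ (c - Finsupp.single ℓ 1 : Fin n →₀ ℕ) j := by
          intro hco
          have := hco ℓ
          rw [hsub ℓ] at this
          simp [hcl1] at this
        rw [show (Gser n (c - Finsupp.single ℓ 1)) m =
          Gser n (c - Finsupp.single ℓ 1) m from rfl, Gser, if_neg this]
        rfl
    · have hg : Gser n c = 0 := by rw [Gser, if_neg hc]
      rw [hg, lop_zero]
      push_neg at hc
      obtain ⟨j, hj⟩ := hc
      have hj0 : c j = 0 := by omega
      have : ∀ i : Fin n, (if Finsupp.single i 1 ≤ c then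
          Gser n (c - Finsupp.single i 1) else 0) = 0 := by
        intro i
        split_ifs with h
        · rw [Gser, if_neg]
          intro hall
          have := hall j
          rw [Finsupp.tsub_apply] at this
          omega
        · rfl
      rw [Finset.sum_congr rfl (fun i _ => this i), Finset.sum_const, smul_zero]

end
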